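/- Let 0 < t < 2 be real, set z := t/√(1 − t/2), m := (2z)^{−1/2}, Λ := m⁻³, u₃ := −m²·(2t − t²/4) − (3/8)mΛ, and 𝚡² := z(2−t)²/((2+t)²·t·(4−t)). Then 1/(48·m²·𝚡²) − (u₃ + Λ²/64)/(6m²) − 3Λ/(16m) = (1/2)·t·(1 − t/2). -/

import Mathlib

/-- equal-mass `N_f = 3` contact term. For `0 < t < 2`, with
`z = t/√(1 − t/2)`, `m = (2z)^{−1/2}`, `Λ = m⁻³`,
`u₃ = −m²(2t − t²/4) − (3/8)mΛ` and `𝚡² = z(2−t)²/((2+t)² t (4−t))`,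
one has `1/(48m²𝚡²) − (u₃ + Λ²/64)/(6m²) − 3Λ/(16m) = (1/2)t(1 − t/2)`. -/
theorem stmt_9 (t z m Λ u3 xSq : ℝ) (ht0 : 0 < t) (ht2 : t < 2)
    (hz : z = t / Real.sqrt (1 - t/2))
    (hm : m = 1 / Real.sqrt (2*z))
    (hΛ : Λ = 1 / m^3)
    (hu3 : u3 = -m^2 * (2*t - t^2/4) - (3/8)*m*Λ)
    (hxSq : xSq = z*(2 - t)^2/((2 + t)^2*t*(4 - t))) :
    1/(48*m^2*xSq) - (u3 + Λ^2/64)/(6*m^2) - 3*Λ/(16*m)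
      = (1/2)*t*(1 - t/2) := by
  have h1 : (0:ℝ) < 1 - t/2 := by linarith
  have hs0 : 0 < Real.sqrt (1 - t/2) := Real.sqrt_pos.mpr h1
  have hs2 : Real.sqrt (1 - t/2) ^ 2 = 1 - t/2 := Real.sq_sqrt h1.le
  have hz0 : 0 < z := by rw [hz]; positivity
  have h2z : Real.sqrt (2*z) ^ 2 = 2*z := Real.sq_sqrt (by linarith)
  have hm0 : 0 < m := by rw [hm]; positivity
  have hmne : m ≠ 0 := hm0.ne'
  have hzne : z ≠ 0 := hz0.ne'
  have hne : (2:ℝ) - t ≠ 0 := by linarith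
  have hne2 : (2:ℝ) + t ≠ 0 := by linarith
  have hne4 : (4:ℝ) - t ≠ 0 := by linarith
  have htne : t ≠ 0 := ht0.ne'
  -- m powers in terms of z
  have hm2 : m^2 * (2*z) = 1 := by
    rw [hm, div_pow, one_pow, h2z]
    field_simp
  have E1 : 1/m^2 = 2*z := by
    field_simp
    linarith [hm2]
  have E4 : 1/m^4 = 4*z^2 := by
    have : (1/m^2)^2 = (2*z)^2 := by rw [E1]
    calc 1/m^4 = (1/m^2)^2 := by field_simp
    _ = (2*z)^2 := this
    _ = 4*z^2 := by ring
  have E8 : 1/m^8 = 16*z^4 := by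
    have : (1/m^4)^2 = (4*z^2)^2 := by rw [E4]
    calc 1/m^8 = (1/m^4)^2 := by field_simp
    _ = (4*z^2)^2 := this
    _ = 16*z^4 := by ring
  -- z^2 in terms of t
  have hz2 : z^2 * (2 - t) = 2*t^2 := by
    have h : z^2 * (1 - t/2) = t^2 := by
      rw [hz, div_pow, hs2]
      field_simp
    linarith [h]
  have hzz : z^2 = 2*t^2/(2-t) := by
    rw [eq_div_iff hne]; linarith [hz2]
  -- the three terms
  have hA : 1/(48*m^2*xSq) = (1/m^2) * ((2+t)^2*t*(4-t)/(48*z*(2-t)^2)) := by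
    rw [hxSq]
    field_simp
  have hB : (u3 + Λ^2/64)/(6*m^2)
      = -(2*t - t^2/4)/6 - (1/16)*(1/m^4) + (1/384)*(1/m^8) := by
    rw [hu3, hΛ]
    field_simp
    ring
  have hC : 3*Λ/(16*m) = (3/16)*(1/m^4) := by
    rw [hΛ]
    field_simp
  rw [hA, hB, hC, E1, E4, E8]
  rw [show (z:ℝ)^4 = (z^2)^2 from by ring, hzz]
  field_simp
  ring
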